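/- Let X be a complex Hilbert space with conjugation J and associated spin norm N. If x₁, x₂ ∈ X satisfy J(x₁) = x₁, J(x₂) = −x₂ and ⟪x₁, x₂⟫ = 0, then N(x₁ + x₂) = N(x₁) + N(x₂). -/

import Mathlib

noncomputable section

open scoped ComplexConjugate

/-- The spin norm associated with a conjugation `J` on a complex Hilbert space. -/
def spinNorm {X : Type*} [NormedAddCommGroup X] [InnerProductSpace ℂ X]
    (J : X → X) (x : X) : ℝ :=
  Real.sqrt (‖x‖ ^ 2 + Real.sqrt (‖x‖ ^ 4 - ‖(inner ℂ x (J x) : ℂ)‖ ^ 2))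

/-- In a spin factor, the spin norm is additive on the sum of a `J`-symmetric and a
`J`-antisymmetric element which are orthogonal for the inner product. -/
theorem spinNorm_add_of_symm_antisymm
    {X : Type*} [NormedAddCommGroup X] [InnerProductSpace ℂ X] [CompleteSpace X]
    (J : X → X)
    (hJadd : ∀ x y, J (x + y) = J x + J y)
    (hJsmul : ∀ (c : ℂ) (x : X), J (c • x) = conj c • J x)
    (hJinv : ∀ x, J (J x) = x)
    (hJinner : ∀ x y, (inner ℂ (J x) (J y) : ℂ) = inner ℂ y x)
    (x₁ x₂ : X) (h₁ : J x₁ = x₁) (h₂ : J x₂ = -x₂)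
    (horth : (inner ℂ x₁ x₂ : ℂ) = 0) :
    spinNorm J (x₁ + x₂) = spinNorm J x₁ + spinNorm J x₂ := by
  have h21 : (inner ℂ x₂ x₁ : ℂ) = 0 := by rw [← inner_conj_symm, horth, map_zero]
  set a := ‖x₁‖ with ha
  set b := ‖x₂‖ with hb
  have hi1 : (inner ℂ x₁ (J x₁) : ℂ) = (a : ℂ) ^ 2 := by
    rw [h₁, inner_self_eq_norm_sq_to_K]; simp only [← ha]; norm_cast
  have hi2 : (inner ℂ x₂ (J x₂) : ℂ) = -(b : ℂ) ^ 2 := by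
    rw [h₂, inner_neg_right, inner_self_eq_norm_sq_to_K]; simp only [← hb]; norm_cast
  have hJsum : J (x₁ + x₂) = x₁ - x₂ := by rw [hJadd, h₁, h₂, sub_eq_add_neg]
  have hi : (inner ℂ (x₁ + x₂) (J (x₁ + x₂)) : ℂ) = (a : ℂ) ^ 2 - (b : ℂ) ^ 2 := by
    rw [hJsum, inner_add_left, inner_sub_right, inner_sub_right, horth, h21,
      inner_self_eq_norm_sq_to_K, inner_self_eq_norm_sq_to_K]
    simp only [← ha, ← hb]
    norm_cast
    simp [Complex.ofReal_sub]
    ring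
  have hnorm : ‖x₁ + x₂‖ ^ 2 = a ^ 2 + b ^ 2 := by
    have := norm_add_sq_eq_norm_sq_add_norm_sq_of_inner_eq_zero x₁ x₂ horth
    nlinarith [this]
  have ha0 : 0 ≤ a := norm_nonneg _
  have hb0 : 0 ≤ b := norm_nonneg _
  have habs : ‖((a : ℂ) ^ 2 - (b : ℂ) ^ 2)‖ ^ 2 = (a ^ 2 - b ^ 2) ^ 2 := by
    have : ((a : ℂ) ^ 2 - (b : ℂ) ^ 2) = ((a ^ 2 - b ^ 2 : ℝ) : ℂ) := by push_cast; ring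
    rw [this, Complex.norm_real, Real.norm_eq_abs, sq_abs]
  have habs1 : ‖((a : ℂ) ^ 2)‖ ^ 2 = a ^ 4 := by
    rw [← Complex.ofReal_pow, Complex.norm_real, Real.norm_eq_abs, abs_of_nonneg (by positivity)]
    ring
  have habs2 : ‖(-(b : ℂ) ^ 2)‖ ^ 2 = b ^ 4 := by
    rw [norm_neg, ← Complex.ofReal_pow, Complex.norm_real, Real.norm_eq_abs,
      abs_of_nonneg (by positivity)]
    ring
  have e1 : spinNorm J x₁ = a := by
    rw [spinNorm, hi1, habs1, sub_self, Real.sqrt_zero, add_zero, ← ha,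
      Real.sqrt_sq ha0]
  have e2 : spinNorm J x₂ = b := by
    rw [spinNorm, hi2, habs2, sub_self, Real.sqrt_zero, add_zero, ← hb,
      Real.sqrt_sq hb0]
  have e3 : spinNorm J (x₁ + x₂) = a + b := by
    rw [spinNorm, hi, habs]
    have h4 : ‖x₁ + x₂‖ ^ 4 = (a ^ 2 + b ^ 2) ^ 2 := by
      rw [show (4 : ℕ) = 2 * 2 from rfl, pow_mul, hnorm]
    rw [h4, hnorm]
    have : (a ^ 2 + b ^ 2) ^ 2 - (a ^ 2 - b ^ 2) ^ 2 = (2 * a * b) ^ 2 := by ring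
    rw [this, Real.sqrt_sq (by positivity)]
    have : a ^ 2 + b ^ 2 + 2 * a * b = (a + b) ^ 2 := by ring
    rw [this, Real.sqrt_sq (by positivity)]
  rw [e1, e2, e3]
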